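/- If S is an LPDS of the king grid with matching partner map m, then for every v ∈ S, the interval neighborhood I(v) = N(v) ∩ N(m(v)) contains no vertex of T₁ and at most one vertex of T₂, where Tᵢ = {u ∈ V\S : |N(u) ∩ S| = i}. -/

import Mathlib

/-- The king grid on `ℤ × ℤ`: distinct vertices are adjacent iff both
coordinates differ by at most 1 (equivalently, Euclidean distance ≤ √2). -/
def kingGrid : SimpleGraph (ℤ × ℤ) where
  Adj u v := u ≠ v ∧ |u.1 - v.1| ≤ 1 ∧ |u.2 - v.2| ≤ 1
  symm := ⟨by
    rintro u v ⟨h, h1, h2⟩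
    refine ⟨h.symm, ?_, ?_⟩ <;> rw [abs_sub_comm] <;> assumption⟩
  loopless := ⟨fun v h => h.1 rfl⟩

/-- Open neighborhood in the king grid. -/
def N (v : ℤ × ℤ) : Set (ℤ × ℤ) := kingGrid.neighborSet v

/-- Closed neighborhood in the king grid. -/
def Ncl (v : ℤ × ℤ) : Set (ℤ × ℤ) := insert v (kingGrid.neighborSet v)

/-- `S` is a dominating set of the king grid. -/
def IsDominating (S : Set (ℤ × ℤ)) : Prop := ∀ u : ℤ × ℤ, (Ncl u ∩ S).Nonempty

/-- `S` is locating: distinct vertices outside `S` have distinct neighborhoods in `S`. -/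
def IsLocating (S : Set (ℤ × ℤ)) : Prop :=
  ∀ u v : ℤ × ℤ, u ∉ S → v ∉ S → u ≠ v → N u ∩ S ≠ N v ∩ S

/-- `m` is the partner map of a perfect matching of the induced subgraph on `S`. -/
def IsPartnerMap (S : Set (ℤ × ℤ)) (m : ℤ × ℤ → ℤ × ℤ) : Prop :=
  ∀ v ∈ S, m v ∈ S ∧ kingGrid.Adj v (m v) ∧ m (m v) = v

/-- `S` is a locating-paired-dominating set with matching partner map `m`. -/
def IsLPDS (S : Set (ℤ × ℤ)) (m : ℤ × ℤ → ℤ × ℤ) : Prop :=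
  IsDominating S ∧ IsLocating S ∧ IsPartnerMap S m

/-- Pendant neighbors of `v` (relative to the partner map `m`). -/
def P (m : ℤ × ℤ → ℤ × ℤ) (v : ℤ × ℤ) : Set (ℤ × ℤ) := N v \ Ncl (m v)

/-- Interval neighbors of `v` (relative to the partner map `m`). -/
def I (m : ℤ × ℤ → ℤ × ℤ) (v : ℤ × ℤ) : Set (ℤ × ℤ) := N v ∩ N (m v)


lemma N_finite (u : ℤ × ℤ) : (N u).Finite := by
  apply Set.Finite.subset (((Set.finite_Icc (u.1-1) (u.1+1)).prod
    (Set.finite_Icc (u.2-1) (u.2+1))))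
  rintro ⟨a, b⟩ (⟨hne, h1, h2⟩ : u ≠ (a, b) ∧ |u.1 - a| ≤ 1 ∧ |u.2 - b| ≤ 1)
  rw [abs_le] at h1 h2
  constructor <;> simp <;> omega

lemma pair_subset {S : Set (ℤ × ℤ)} {m : ℤ × ℤ → ℤ × ℤ} {v u : ℤ × ℤ}
    (hv : v ∈ S) (hmS : m v ∈ S) (hu : u ∈ I m v) :
    ({v, m v} : Set (ℤ × ℤ)) ⊆ N u ∩ S := by
  obtain ⟨h1, h2⟩ := hu
  rintro x (rfl | rfl)
  · exact ⟨kingGrid.adj_symm h1, hv⟩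
  · exact ⟨kingGrid.adj_symm h2, hmS⟩

theorem lpds_interval_T1_T2 (S : Set (ℤ × ℤ)) (m : ℤ × ℤ → ℤ × ℤ)
    (h : IsLPDS S m) (v : ℤ × ℤ) (hv : v ∈ S) :
    I m v ∩ {u | u ∉ S ∧ (N u ∩ S).ncard = 1} = ∅ ∧
    (I m v ∩ {u | u ∉ S ∧ (N u ∩ S).ncard = 2}).Subsingleton := by
  obtain ⟨hdom, hloc, hpm⟩ := h
  obtain ⟨hmS, hadj, -⟩ := hpm v hv
  have hne : v ≠ m v := hadj.ne
  have hfin : ∀ u, (N u ∩ S).Finite := fun u => (N_finite u).inter_of_left S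
  have key : ∀ u ∈ I m v, 2 ≤ (N u ∩ S).ncard := by
    intro u hu
    calc 2 = ({v, m v} : Set (ℤ × ℤ)).ncard := (Set.ncard_pair hne).symm
    _ ≤ (N u ∩ S).ncard := Set.ncard_le_ncard (pair_subset hv hmS hu) (hfin u)
  constructor
  · ext u
    simp only [Set.mem_inter_iff, Set.mem_setOf_eq, Set.mem_empty_iff_false, iff_false]
    rintro ⟨hu, -, hc⟩
    have := key u hu
    omega
  · rintro u ⟨hu, huS, hu2⟩ w ⟨hw, hwS, hw2⟩
    by_contra hne'
    apply hloc u w huS hwS hne'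
    have eu : N u ∩ S = {v, m v} :=
      (Set.eq_of_subset_of_ncard_le (pair_subset hv hmS hu)
        (by rw [hu2, Set.ncard_pair hne]) (hfin u)).symm
    have ew : N w ∩ S = {v, m v} :=
      (Set.eq_of_subset_of_ncard_le (pair_subset hv hmS hw)
        (by rw [hw2, Set.ncard_pair hne]) (hfin w)).symm
    rw [eu, ew]
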